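/- For every t > 0 and x ∈ ℝ, the map λ ↦ Z_t^λ(x) is real-analytic on (0,∞) with ∂_λ^n Z_t^λ(x) = t^n ∂_x^{2n} Z_t^λ(x) for every n ∈ ℕ; in particular ∂_λ Z^λ(t,x) = t ∂_x² Z^λ(t,x). Moreover ∂_λ Z^λ(t,x) = ∫_0^t ∫_ℝ Z^λ(t−s, x−y) · ∂_y² Z^λ(s,y) dy ds for all t > 0 and x ∈ ℝ. -/

import Mathlib

open MeasureTheory Real

/-- The heat kernel `Z_t^λ(x) = e^{−ct}(4πλt)^{−1/2} exp(−x²/(4λt))` for `t > 0`,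
extended by `0` for `t ≤ 0` (the fundamental solution of `∂_t − λ∂_x² + c`). -/
noncomputable def Zker (c lam t x : ℝ) : ℝ :=
  if 0 < t then
    Real.exp (-c * t) * (Real.sqrt (4 * Real.pi * lam * t))⁻¹ *
      Real.exp (-x ^ 2 / (4 * lam * t))
  else 0

section auxZ
open Polynomial Filter

/-- Explicit formula for iterated `x`-derivatives of the heat kernel. -/
noncomputable def Pker (c lam t x : ℝ) (m : ℕ) : ℝ :=
  Real.exp (-c*t) * (Real.sqrt (4*Real.pi*lam*t))⁻¹ * ((Real.sqrt (2*lam*t))⁻¹)^m * (-1:ℝ)^m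
    * Polynomial.aeval (x / Real.sqrt (2*lam*t)) (Polynomial.hermite m)
    * Real.exp (-x^2/(4*lam*t))

open Polynomial in
lemma derivHermite : ∀ n : ℕ, derivative (hermite (n+1)) = ((n : ℤ[X])+1) * hermite n := by
  intro n
  induction n with
  | zero => simp [Polynomial.hermite_succ, Polynomial.hermite_zero]
  | succ n ih =>
    rw [Polynomial.hermite_succ (n+1), derivative_sub, derivative_mul, derivative_X, ih,
      derivative_mul]
    have : derivative ((n : ℤ[X]) + 1) = 0 := by simp
    rw [this, Polynomial.hermite_succ n]
    push_cast
    ring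

open Polynomial in
lemma hermiteIdent (m : ℕ) (y : ℝ) :
    aeval y (hermite (m+2)) =
      y^2 * aeval y (hermite m) - y * aeval y (derivative (hermite m))
        - (m+1) * aeval y (hermite m) := by
  rw [Polynomial.hermite_succ (m+1), derivHermite m, Polynomial.hermite_succ m]
  simp only [map_sub, map_mul, map_add, map_one, aeval_X, map_natCast]
  ring

open Polynomial in
lemma hermiteTwo (y : ℝ) : aeval y (hermite 2) = y^2 - 1 := by
  have := hermiteIdent 0 y
  simp only [Polynomial.hermite_zero, derivative_one, map_one, map_zero, Nat.cast_zero] at this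
  rw [show (0+2 : ℕ) = 2 from rfl] at this
  rw [this]; ring

lemma integrable_sq_gauss {q : ℝ} (hq : 0 < q) :
    Integrable (fun z : ℝ => z^2 * Real.exp (-q * z^2)) := by
  have h := integrable_rpow_mul_exp_neg_mul_sq hq (by norm_num : (-1:ℝ) < 2)
  refine h.congr (Eventually.of_forall fun z => ?_)
  norm_num

lemma integrable_lin_gauss {q : ℝ} (hq : 0 < q) :
    Integrable (fun z : ℝ => z * Real.exp (-q * z^2)) := by
  have h := integrable_rpow_mul_exp_neg_mul_sq hq (by norm_num : (-1:ℝ) < 1)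
  refine h.congr (Eventually.of_forall fun z => ?_)
  simp

lemma G1 {q : ℝ} : ∫ z : ℝ, z * Real.exp (-q * z^2) = 0 := by
  have h := MeasureTheory.integral_neg_eq_self (fun z : ℝ => z * Real.exp (-q * z^2)) volume
  simp only [neg_sq, neg_mul] at h
  rw [integral_neg] at h
  have h2 : ∫ z : ℝ, z * Real.exp (-q * z^2) = ∫ z : ℝ, z * Real.exp (-(q * z^2)) := by
    simp only [neg_mul]
  rw [h2]
  linarith

lemma tendsto_gauss_aux {q : ℝ} (hq : 0 < q) :
    Tendsto (fun z : ℝ => z * Real.exp (-q * z^2)) atTop (nhds 0) := by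
  have h := rpow_mul_exp_neg_mul_sq_isLittleO_exp_neg hq 1
  have h2 : Tendsto (fun x : ℝ => Real.exp (-(1/2) * x)) atTop (nhds 0) := by
    apply Real.tendsto_exp_atBot.comp
    exact tendsto_id.const_mul_atTop_of_neg (by norm_num)
  have h3 := h.tendsto_zero_of_tendsto h2
  refine h3.congr' ?_
  filter_upwards [eventually_gt_atTop (0:ℝ)] with z hz
  rw [Real.rpow_one]

lemma tendsto_gauss_aux_bot {q : ℝ} (hq : 0 < q) :
    Tendsto (fun z : ℝ => z * Real.exp (-q * z^2)) atBot (nhds 0) := by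
  have h : Tendsto (fun w : ℝ => -(w * Real.exp (-q * w^2))) atTop (nhds 0) := by
    simpa using (tendsto_gauss_aux hq).neg
  have := h.comp tendsto_neg_atBot_atTop
  refine this.congr fun z => ?_
  simp [Function.comp]

lemma G2 {q : ℝ} (hq : 0 < q) :
    ∫ z : ℝ, z^2 * Real.exp (-q * z^2) = Real.sqrt (Real.pi / q) / (2*q) := by
  set g : ℝ → ℝ := fun z => -(z/(2*q)) * Real.exp (-q * z^2) with hg
  set g' : ℝ → ℝ := fun z => z^2 * Real.exp (-q * z^2) - (1/(2*q)) * Real.exp (-q * z^2) with hg'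
  have hd : ∀ z : ℝ, HasDerivAt g (g' z) z := by
    intro z
    have h1 : HasDerivAt (fun z : ℝ => -(z/(2*q))) (-(1/(2*q))) z := by
      simpa using ((hasDerivAt_id z).div_const (2*q)).fun_neg
    have h2 : HasDerivAt (fun z : ℝ => Real.exp (-q * z^2)) ((-q * (2*z)) * Real.exp (-q*z^2)) z := by
      have := ((hasDerivAt_pow 2 z).const_mul (-q)).exp
      simpa [mul_comm] using this
    have := h1.mul h2
    refine this.congr_deriv (Eq.symm ?_)
    simp only [hg']
    field_simp
    ring
  have hint : Integrable g' := by
    exact (integrable_sq_gauss hq).sub ((integrable_exp_neg_mul_sq hq).const_mul _)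
  have htop : Tendsto g atTop (nhds 0) := by
    have : Tendsto (fun z:ℝ => (-(1/(2*q))) * (z * Real.exp (-q * z^2))) atTop (nhds 0) := by
      simpa using (tendsto_gauss_aux hq).const_mul (-(1/(2*q)))
    refine this.congr fun z => ?_; simp [hg]; ring
  have hbot : Tendsto g atBot (nhds 0) := by
    have : Tendsto (fun z:ℝ => (-(1/(2*q))) * (z * Real.exp (-q * z^2))) atBot (nhds 0) := by
      simpa using (tendsto_gauss_aux_bot hq).const_mul (-(1/(2*q)))
    refine this.congr fun z => ?_; simp [hg]; ring
  have hIoi : ∫ z in Set.Ioi (0:ℝ), g' z = 0 - g 0 :=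
    integral_Ioi_of_hasDerivAt_of_tendsto' (fun z _ => hd z) hint.integrableOn htop
  have hIic : ∫ z in Set.Iic (0:ℝ), g' z = g 0 - 0 :=
    integral_Iic_of_hasDerivAt_of_tendsto' (fun z _ => hd z) hint.integrableOn hbot
  have hsplit : ∫ z : ℝ, g' z = (∫ z in Set.Iic (0:ℝ), g' z) + ∫ z in Set.Ioi (0:ℝ), g' z := by
    rw [← MeasureTheory.integral_add_compl (measurableSet_Iic) hint]
    congr 1
    · congr 1
      simp [Set.compl_Iic]
  have htot : ∫ z : ℝ, g' z = 0 := by rw [hsplit, hIoi, hIic]; ring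
  have hexp : ∫ z : ℝ, Real.exp (-q * z^2) = Real.sqrt (Real.pi / q) := integral_gaussian q
  have := MeasureTheory.integral_sub (integrable_sq_gauss hq)
    ((integrable_exp_neg_mul_sq hq).const_mul (1/(2*q)))
  rw [hg'] at htot
  rw [this] at htot
  rw [MeasureTheory.integral_const_mul, hexp] at htot
  have : ∫ z : ℝ, z^2 * Real.exp (-q * z^2) = (1/(2*q)) * Real.sqrt (Real.pi / q) := by linarith
  rw [this]; ring

lemma GInt {q : ℝ} (hq : 0 < q) (α β γ μ : ℝ) :
    ∫ y : ℝ, (α*y^2 + β*y + γ) * Real.exp (-q*(y-μ)^2)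
      = Real.sqrt (Real.pi/q) * (α*(μ^2 + 1/(2*q)) + β*μ + γ) := by
  have h0 : (∫ y : ℝ, (α*y^2 + β*y + γ) * Real.exp (-q*(y-μ)^2))
      = ∫ z : ℝ, (α * (z^2 * Real.exp (-q*z^2)) + ((2*α*μ+β) * (z * Real.exp (-q*z^2))
          + (α*μ^2+β*μ+γ) * Real.exp (-q*z^2))) := by
    rw [← MeasureTheory.integral_sub_right_eq_self
      (fun z => α * (z^2 * Real.exp (-q*z^2)) + ((2*α*μ+β) * (z * Real.exp (-q*z^2))
          + (α*μ^2+β*μ+γ) * Real.exp (-q*z^2))) μ]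
    congr 1; funext y; ring_nf
  have i2 : Integrable (fun z : ℝ => (2*α*μ+β) * (z * Real.exp (-q*z^2))
      + (α*μ^2+β*μ+γ) * Real.exp (-q*z^2)) := by
    exact ((integrable_lin_gauss hq).const_mul _).add ((integrable_exp_neg_mul_sq hq).const_mul _)
  rw [h0, MeasureTheory.integral_add ((integrable_sq_gauss hq).const_mul α) i2,
    MeasureTheory.integral_add ((integrable_lin_gauss hq).const_mul _)
      ((integrable_exp_neg_mul_sq hq).const_mul _)]
  rw [MeasureTheory.integral_const_mul, MeasureTheory.integral_const_mul,
    MeasureTheory.integral_const_mul, G1, G2 hq, integral_gaussian]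
  ring

lemma analyticAt_rlog {a : ℝ} (ha : 0 < a) : AnalyticAt ℝ Real.log a := by
  have h1 : AnalyticAt ℝ (fun y : ℝ => (y : ℂ)) a := Complex.ofRealCLM.analyticAt a
  have h2 : AnalyticAt ℝ Complex.log (a : ℂ) :=
    (analyticAt_clog (Complex.ofReal_mem_slitPlane.mpr ha)).restrictScalars
  have h3 : AnalyticAt ℝ (fun z : ℂ => z.re) (Complex.log (a:ℂ)) := Complex.reCLM.analyticAt _
  have h : AnalyticAt ℝ (fun y : ℝ => (Complex.log (y:ℂ)).re) a := (h3.comp h2).comp h1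
  refine h.congr ?_
  filter_upwards [IsOpen.mem_nhds isOpen_Ioi ha] with y hy
  rw [Complex.log_ofReal_re]

lemma analyticAt_rsqrt {a : ℝ} (ha : 0 < a) : AnalyticAt ℝ Real.sqrt a := by
  have h : AnalyticAt ℝ (fun y : ℝ => Real.exp (Real.log y * (1/2))) a :=
    ((analyticAt_rlog ha).mul analyticAt_const).rexp
  refine h.congr ?_
  filter_upwards [IsOpen.mem_nhds isOpen_Ioi ha] with y (hy : 0 < y)
  rw [Real.sqrt_eq_rpow, Real.rpow_def_of_pos hy]

lemma contDiff_gauss : ContDiff ℝ ⊤ (fun y : ℝ => Real.exp (-(y^2/2))) :=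
  Real.contDiff_exp.comp (((contDiff_id.pow 2).div_const 2).neg)

open Polynomial in
lemma lemA {c lam t : ℝ} (ht : 0 < t) (hl : 0 < lam) (m : ℕ) (x : ℝ) :
    iteratedDeriv m (fun w => Zker c lam t w) x = Pker c lam t x m := by
  have hσpos : 0 < Real.sqrt (2*lam*t) := Real.sqrt_pos.mpr (by positivity)
  set σ : ℝ := Real.sqrt (2*lam*t) with hσ
  have hσ2 : σ^2 = 2*lam*t := Real.sq_sqrt (by positivity)
  have hσne : σ ≠ 0 := ne_of_gt hσpos
  have hfun : (fun w => Zker c lam t w) =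
      fun w => (Real.exp (-c*t) * (Real.sqrt (4*Real.pi*lam*t))⁻¹) *
        (fun y : ℝ => Real.exp (-(y^2/2))) (σ⁻¹ * w) := by
    funext w
    simp only [Zker, if_pos ht]
    have he : -((σ⁻¹*w)^2/2) = -w^2/(4*lam*t) := by
      rw [mul_pow, inv_pow, hσ2]; ring
    rw [he]
  have hin : ContDiffOn ℝ (m : ℕ∞) (fun w : ℝ => (fun y : ℝ => Real.exp (-(y^2/2))) (σ⁻¹ * w))
      Set.univ := ((contDiff_gauss.comp (contDiff_const.mul contDiff_id)).of_le le_top).contDiffOn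
  rw [hfun, ← iteratedDerivWithin_univ,
    iteratedDerivWithin_const_mul (Set.mem_univ x) uniqueDiffOn_univ _ (hin x (Set.mem_univ x)),
    iteratedDerivWithin_univ,
    iteratedDeriv_comp_const_mul (contDiff_gauss.of_le le_top) σ⁻¹]
  simp only [iteratedDeriv_eq_iterate, Polynomial.deriv_gaussian_eq_hermite_mul_gaussian, Pker]
  have h1 : σ⁻¹ * x = x / σ := by ring
  have h2 : -((x/σ)^2/2) = -x^2/(4*lam*t) := by
    rw [div_pow, hσ2]; ring
  rw [h1, h2]
  ring

open Polynomial in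
lemma lemC {c t x : ℝ} (ht : 0 < t) (m : ℕ) {lam : ℝ} (hl : 0 < lam) :
    HasDerivAt (fun l => Pker c l t x m) (t * Pker c lam t x (m+2)) lam := by
  have htne := ht.ne'
  have hlne := hl.ne'
  obtain ⟨s, hs⟩ : ∃ s, Real.sqrt (2*lam*t) = s := ⟨_, rfl⟩
  have hspos : 0 < s := hs ▸ Real.sqrt_pos.mpr (by positivity)
  have hsne : s ≠ 0 := ne_of_gt hspos
  have hs2 : s^2 = 2*lam*t := by rw [← hs]; exact Real.sq_sqrt (by positivity)
  have hlam : lam = s^2/(2*t) := by rw [hs2]; field_simp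
  have hsqrt : ∀ l : ℝ, Real.sqrt (4*Real.pi*l*t) = Real.sqrt (2*Real.pi) * Real.sqrt (2*l*t) := by
    intro l
    rw [show (4*Real.pi*l*t) = (2*Real.pi)*(2*l*t) by ring,
      Real.sqrt_mul (by positivity)]
  have hexparg : ∀ l : ℝ, -x^2/(4*l*t) = (-x^2/(4*t)) * l⁻¹ := by
    intro l
    rcases eq_or_ne l 0 with h|h
    · simp [h]
    · field_simp
  have hfun : (fun l => Pker c l t x m) = fun l =>
      (Real.exp (-c*t) * (Real.sqrt (2*Real.pi))⁻¹ * (-1:ℝ)^m) *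
        (((Real.sqrt (2*l*t))⁻¹)^(m+1) *
          ((aeval (x * (Real.sqrt (2*l*t))⁻¹) (hermite m)) *
            Real.exp ((-x^2/(4*t)) * l⁻¹))) := by
    funext l
    rw [Pker, hsqrt l, hexparg l, div_eq_mul_inv x, mul_inv, pow_succ]
    ring
  rw [hfun]
  have hinner : HasDerivAt (fun l : ℝ => 2*l*t) (2*t) lam := by
    simpa using ((hasDerivAt_id lam).const_mul 2).mul_const t
  have hS : HasDerivAt (fun l : ℝ => Real.sqrt (2*l*t)) (s/(2*lam)) lam := by
    have h := (Real.hasDerivAt_sqrt (show (2*lam*t) ≠ 0 by positivity)).comp lam hinner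
    refine h.congr_deriv (Eq.symm ?_)
    have h2 : (1:ℝ)/(2*s)*(2*t) = t/s := by field_simp
    rw [hs, h2, div_eq_div_iff (by positivity) (by positivity)]
    linear_combination hs2
  have hSinv : HasDerivAt (fun l : ℝ => (Real.sqrt (2*l*t))⁻¹) (-(s⁻¹/(2*lam))) lam := by
    have h := hS.inv (by rw [hs]; exact hsne)
    refine h.congr_deriv (Eq.symm ?_)
    rw [hs]
    field_simp
  have hpow : HasDerivAt (fun l : ℝ => ((Real.sqrt (2*l*t))⁻¹)^(m+1))
      (-(((m:ℝ)+1) * (s⁻¹)^(m+1) / (2*lam))) lam := by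
    have h := hSinv.pow (m+1)
    refine h.congr_deriv (Eq.symm ?_)
    rw [hs]
    simp only [Nat.add_sub_cancel]
    rw [pow_succ]
    push_cast
    ring
  have hH : HasDerivAt (fun l : ℝ => aeval (x * (Real.sqrt (2*l*t))⁻¹) (hermite m))
      (aeval (x * s⁻¹) (derivative (hermite m)) * (x * -(s⁻¹/(2*lam)))) lam := by
    have h := (Polynomial.hasDerivAt_aeval (hermite m)
      (x * (Real.sqrt (2*lam*t))⁻¹)).comp lam (hSinv.const_mul x)
    rw [hs] at h
    exact h
  have hE : HasDerivAt (fun l : ℝ => Real.exp ((-x^2/(4*t)) * l⁻¹))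
      (Real.exp ((-x^2/(4*t)) * lam⁻¹) * (x^2 * (s⁻¹)^2 / (2*lam))) lam := by
    have h := ((hasDerivAt_inv hlne).const_mul (-x^2/(4*t))).exp
    convert h using 2
    rw [inv_pow, hs2]
    ring
  have htotal := (hpow.fun_mul (hH.fun_mul hE)).const_mul
      (Real.exp (-c*t) * (Real.sqrt (2*Real.pi))⁻¹ * (-1:ℝ)^m)
  refine htotal.congr_deriv (Eq.symm ?_)
  simp only [Pker]
  rw [hsqrt lam, hexparg lam, div_eq_mul_inv x, mul_inv, hs, hermiteIdent]
  rw [hlam]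
  simp only [pow_succ]
  field_simp
  ring

lemma lemInduct {c t x : ℝ} (ht : 0 < t) (n : ℕ) :
    ∀ {lam : ℝ}, 0 < lam →
      iteratedDeriv n (fun l => Zker c l t x) lam = t^n * Pker c lam t x (2*n) := by
  induction n with
  | zero =>
    intro lam hl
    simp only [iteratedDeriv_zero, pow_zero, one_mul, Nat.mul_zero]
    simp [Zker, Pker, if_pos ht]
  | succ n ih =>
    intro lam hl
    rw [iteratedDeriv_succ]
    have hev : iteratedDeriv n (fun l => Zker c l t x)
        =ᶠ[nhds lam] (fun l => t^n * Pker c l t x (2*n)) := by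
      filter_upwards [IsOpen.mem_nhds isOpen_Ioi hl] with l hl' using ih hl'
    rw [hev.deriv_eq, ((lemC ht (2*n) hl).const_mul (t^n)).deriv,
      show 2*(n+1) = 2*n+2 by ring]
    ring

end auxZ
open Polynomial Filter

/-- Analyticity of the heat kernel in the diffusivity: for `t > 0` and `x ∈ ℝ`, the map
`λ ↦ Z_t^λ(x)` is real-analytic on `(0,∞)` with `∂_λ^n Z_t^λ(x) = tⁿ ∂_x^{2n} Z_t^λ(x)`,
and `∂_λ Z^λ(t,x) = ∫_0^t ∫_ℝ Z^λ(t−s, x−y) ∂_y² Z^λ(s,y) dy ds`. -/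
theorem stmt16 (c : ℝ) (hc : 0 ≤ c) (t x : ℝ) (ht : 0 < t) :
    (∀ lam > (0:ℝ), AnalyticAt ℝ (fun l => Zker c l t x) lam) ∧
    (∀ lam > (0:ℝ), ∀ n : ℕ,
      iteratedDeriv n (fun l => Zker c l t x) lam =
        t ^ n * iteratedDeriv (2 * n) (fun w => Zker c lam t w) x) ∧
    (∀ lam > (0:ℝ),
      deriv (fun l => Zker c l t x) lam =
        ∫ s in Set.Ioo (0:ℝ) t, ∫ y : ℝ,
          Zker c lam (t - s) (x - y) * iteratedDeriv 2 (fun w => Zker c lam s w) y) := by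
  refine ⟨?_, ?_, ?_⟩
  · -- analyticity
    intro lam hl
    have heq : (fun l => Zker c l t x) = fun l =>
        Real.exp (-c*t) * (Real.sqrt (4*Real.pi*l*t))⁻¹ * Real.exp (-x^2/(4*l*t)) := by
      funext l; simp [Zker, if_pos ht]
    rw [heq]
    have h1 : AnalyticAt ℝ (fun l : ℝ => 4*Real.pi*l*t) lam :=
      ((analyticAt_const.mul analyticAt_id).mul analyticAt_const)
    have h2 : AnalyticAt ℝ (fun l : ℝ => (Real.sqrt (4*Real.pi*l*t))⁻¹) lam := by
      refine AnalyticAt.inv ((analyticAt_rsqrt (by positivity)).comp h1) ?_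
      exact ne_of_gt (Real.sqrt_pos.mpr (by positivity))
    have h1b : AnalyticAt ℝ (fun l : ℝ => 4*l*t) lam :=
      ((analyticAt_const.mul analyticAt_id).mul analyticAt_const)
    have h3 : AnalyticAt ℝ (fun l : ℝ => Real.exp (-x^2/(4*l*t))) lam := by
      refine AnalyticAt.rexp (AnalyticAt.div analyticAt_const h1b (by positivity))
    exact (analyticAt_const.mul h2).mul h3
  · -- derivative identities
    intro lam hl n
    rw [lemInduct ht n hl, lemA ht hl (2*n) x]
  · -- integral identity
    intro lam hl
    have h1 : deriv (fun l => Zker c l t x) lam = t * Pker c lam t x 2 := by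
      rw [← iteratedDeriv_one, lemInduct ht 1 hl]
      norm_num
    have hinner : ∀ s ∈ Set.Ioo (0:ℝ) t,
        (∫ y : ℝ, Zker c lam (t - s) (x - y) * iteratedDeriv 2 (fun w => Zker c lam s w) y)
          = Pker c lam t x 2 := by
      intro s hs
      obtain ⟨hs0, hst⟩ := hs
      have hts : 0 < t - s := by linarith
      have hlt := hl.ne'
      have hq : 0 < t/(4*lam*s*(t-s)) := by positivity
      have hptw : ∀ y : ℝ, Zker c lam (t - s) (x - y) * iteratedDeriv 2 (fun w => Zker c lam s w) y
          = (Real.exp (-c*t) * (Real.sqrt (4*Real.pi*lam*(t-s)))⁻¹ * (Real.sqrt (4*Real.pi*lam*s))⁻¹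
              * (2*lam*s)⁻¹ * Real.exp (-x^2/(4*lam*t)))
            * (((2*lam*s)⁻¹*y^2 + 0*y + (-1))
              * Real.exp (-(t/(4*lam*s*(t-s)))*(y-(s*x/t))^2)) := by
        intro y
        rw [lemA hs0 hl 2 y]
        simp only [Zker, Pker, if_pos hts, hermiteTwo]
        have hss : (Real.sqrt (2*lam*s))^2 = 2*lam*s := Real.sq_sqrt (by positivity)
        have e1 : ((Real.sqrt (2*lam*s))⁻¹)^2 = (2*lam*s)⁻¹ := by rw [inv_pow, hss]
        have e2 : (y / Real.sqrt (2*lam*s))^2 = (2*lam*s)⁻¹ * y^2 := by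
          rw [div_pow, hss]; ring
        rw [e1, e2]
        have e3 : Real.exp (-c*(t-s)) * Real.exp (-c*s) = Real.exp (-c*t) := by
          rw [← Real.exp_add]; ring_nf
        have e4 : Real.exp (-(x-y)^2/(4*lam*(t-s))) * Real.exp (-y^2/(4*lam*s))
            = Real.exp (-x^2/(4*lam*t)) * Real.exp (-(t/(4*lam*s*(t-s)))*(y-(s*x/t))^2) := by
          rw [← Real.exp_add, ← Real.exp_add]
          congr 1
          field_simp
          ring
        calc Real.exp (-c*(t-s)) * (Real.sqrt (4*Real.pi*lam*(t-s)))⁻¹ *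
              Real.exp (-(x-y)^2/(4*lam*(t-s))) *
            (Real.exp (-c*s) * (Real.sqrt (4*Real.pi*lam*s))⁻¹ * (2*lam*s)⁻¹ * (-1:ℝ)^2 *
              ((2*lam*s)⁻¹*y^2 - 1) * Real.exp (-y^2/(4*lam*s)))
            = (Real.exp (-c*(t-s)) * Real.exp (-c*s)) * (Real.sqrt (4*Real.pi*lam*(t-s)))⁻¹ *
              (Real.sqrt (4*Real.pi*lam*s))⁻¹ * (2*lam*s)⁻¹ * ((2*lam*s)⁻¹*y^2 - 1) *
              (Real.exp (-(x-y)^2/(4*lam*(t-s))) * Real.exp (-y^2/(4*lam*s))) := by ring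
          _ = _ := by rw [e3, e4]; ring
      rw [MeasureTheory.integral_congr_ae (Filter.Eventually.of_forall hptw),
        MeasureTheory.integral_const_mul, GInt hq]
      -- final scalar identity
      have hu : Real.sqrt (4*Real.pi*lam*(t-s)) * Real.sqrt (4*Real.pi*lam*s)
          = Real.sqrt (4*Real.pi*lam*t) * Real.sqrt (Real.pi/(t/(4*lam*s*(t-s)))) := by
        rw [← Real.sqrt_mul (by positivity), ← Real.sqrt_mul (by positivity)]
        congr 1
        field_simp
      have hu1 : (0:ℝ) < Real.sqrt (4*Real.pi*lam*(t-s)) := Real.sqrt_pos.mpr (by positivity)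
      have hu2 : (0:ℝ) < Real.sqrt (4*Real.pi*lam*s) := Real.sqrt_pos.mpr (by positivity)
      have hu3 : (0:ℝ) < Real.sqrt (4*Real.pi*lam*t) := Real.sqrt_pos.mpr (by positivity)
      have hu4 : (0:ℝ) < Real.sqrt (Real.pi/(t/(4*lam*s*(t-s)))) :=
        Real.sqrt_pos.mpr (by positivity)
      have key : (Real.sqrt (4*Real.pi*lam*(t-s)))⁻¹ * (Real.sqrt (4*Real.pi*lam*s))⁻¹
          * Real.sqrt (Real.pi/(t/(4*lam*s*(t-s)))) = (Real.sqrt (4*Real.pi*lam*t))⁻¹ := by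
        rw [← mul_inv, inv_mul_eq_div, div_eq_iff (mul_pos hu1 hu2).ne', hu,
          inv_mul_cancel_left₀ hu3.ne']
      simp only [Pker, hermiteTwo]
      have hss : (Real.sqrt (2*lam*t))^2 = 2*lam*t := Real.sq_sqrt (by positivity)
      have e1 : ((Real.sqrt (2*lam*t))⁻¹)^2 = (2*lam*t)⁻¹ := by rw [inv_pow, hss]
      have e2 : (x / Real.sqrt (2*lam*t))^2 = (2*lam*t)⁻¹ * x^2 := by
        rw [div_pow, hss]; ring
      rw [e1, e2]
      calc (Real.exp (-c*t) * (Real.sqrt (4*Real.pi*lam*(t-s)))⁻¹ * (Real.sqrt (4*Real.pi*lam*s))⁻¹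
              * (2*lam*s)⁻¹ * Real.exp (-x^2/(4*lam*t)))
            * (Real.sqrt (Real.pi/(t/(4*lam*s*(t-s)))) *
              ((2*lam*s)⁻¹*((s*x/t)^2 + 1/(2*(t/(4*lam*s*(t-s))))) + 0*(s*x/t) + (-1)))
          = (Real.exp (-c*t) * Real.exp (-x^2/(4*lam*t))) *
            ((Real.sqrt (4*Real.pi*lam*(t-s)))⁻¹ * (Real.sqrt (4*Real.pi*lam*s))⁻¹
              * Real.sqrt (Real.pi/(t/(4*lam*s*(t-s))))) *
            ((2*lam*s)⁻¹ * ((2*lam*s)⁻¹*((s*x/t)^2 + 1/(2*(t/(4*lam*s*(t-s))))) - 1)) := by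
            ring
        _ = _ := by
            rw [key]
            have hfin : (2*lam*s)⁻¹ * ((2*lam*s)⁻¹*((s*x/t)^2 + 1/(2*(t/(4*lam*s*(t-s))))) - 1)
                = (2*lam*t)⁻¹ * ((2*lam*t)⁻¹*x^2 - 1) := by
              field_simp
              ring
            rw [hfin]
            ring
    rw [h1, MeasureTheory.setIntegral_congr_fun measurableSet_Ioo hinner]
    rw [MeasureTheory.setIntegral_const]
    rw [measureReal_def, Real.volume_Ioo, ENNReal.toReal_ofReal (by linarith), smul_eq_mul]
    ring
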